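/- Let a, b ∈ ℝ and let k : ℝ³ → ℝ be the function k(x) = 1 + (3x₁² − 2x₂² − x₃²)/(1+|x|²)² + (|x|⁴/(1+|x|²)³)(b − a/(1+|x|²) − (1−a)/(1+|x|²)²). Then k(0) = 1, ∇k(0) = 0, Δk(0) = 0, ∇(Δk)(0) = 0, the Hessian D²k(0) is invertible, and a₁ := Δ²k(0) + ∇(Δk)(0) · (D²k(0))^{−1} ∇(Δk)(0) = 120(b − 1), where Δ is the Euclidean Laplacian and Δ² its square. -/

import Mathlib

open MeasureTheory Real

/-- The Euclidean Laplacian: sum of second partial derivatives. -/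
noncomputable def lap (u : EuclideanSpace ℝ (Fin 3) → ℝ) (x : EuclideanSpace ℝ (Fin 3)) : ℝ :=
  ∑ i : Fin 3,
    fderiv ℝ (fun z => fderiv ℝ u z (EuclideanSpace.single i 1)) x (EuclideanSpace.single i 1)

/-- The function `k` from the example in the paper. -/
noncomputable def kfun (a b : ℝ) (x : EuclideanSpace ℝ (Fin 3)) : ℝ :=
  1 + (3 * x 0 ^ 2 - 2 * x 1 ^ 2 - x 2 ^ 2) / (1 + ‖x‖ ^ 2) ^ 2 +
    ‖x‖ ^ 4 / (1 + ‖x‖ ^ 2) ^ 3 *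
      (b - a / (1 + ‖x‖ ^ 2) - (1 - a) / (1 + ‖x‖ ^ 2) ^ 2)

namespace Stmt18Aux

noncomputable section

abbrev E3 := EuclideanSpace ℝ (Fin 3)

def sgl (i : Fin 3) : E3 := EuclideanSpace.single i 1

def prj (i : Fin 3) : E3 →L[ℝ] ℝ := EuclideanSpace.proj i

def T (x : E3) : ℝ := x 0 ^ 2 + x 1 ^ 2 + x 2 ^ 2

def uu (x : E3) : ℝ := 3 * x 0 ^ 2 - 2 * x 1 ^ 2 - x 2 ^ 2

def cc : Fin 3 → ℝ := ![3, -2, -1]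

def DT (x : E3) : E3 →L[ℝ] ℝ := (2 * x 0) • prj 0 + (2 * x 1) • prj 1 + (2 * x 2) • prj 2

def DU (x : E3) : E3 →L[ℝ] ℝ :=
  (6 * x 0) • prj 0 + ((-4) * x 1) • prj 1 + ((-2) * x 2) • prj 2

lemma prj_apply (i : Fin 3) (x : E3) : prj i x = x i := rfl

lemma sgl_apply (i j : Fin 3) : sgl i j = if j = i then 1 else 0 :=
  EuclideanSpace.single_apply i 1 j

lemma sgl_same (i : Fin 3) : sgl i i = 1 := by rw [sgl_apply]; simp

lemma T_nonneg (x : E3) : 0 ≤ T x := by unfold T; positivity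

lemma one_add_T_ne (x : E3) : (1 : ℝ) + T x ≠ 0 := by
  have := T_nonneg x; positivity

lemma hprj (i : Fin 3) (x : E3) : HasFDerivAt (fun x : E3 => x i) (prj i) x :=
  (prj i).hasFDerivAt

lemma hT (x : E3) : HasFDerivAt T (DT x) x := by
  have hfun : T = fun y : E3 => y 0 * y 0 + (y 1 * y 1 + y 2 * y 2) := by
    funext y; unfold T; ring
  rw [hfun]
  have h := ((hprj 0 x).mul (hprj 0 x)).add (((hprj 1 x).mul (hprj 1 x)).add
    ((hprj 2 x).mul (hprj 2 x)))
  refine h.congr_fderiv (Eq.symm ?_)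
  refine ContinuousLinearMap.ext fun v => ?_
  simp only [DT, ContinuousLinearMap.add_apply, ContinuousLinearMap.smul_apply, prj_apply,
    smul_eq_mul]
  ring

lemma hU (x : E3) : HasFDerivAt uu (DU x) x := by
  have hfun : uu = fun y : E3 => 3 * (y 0 * y 0) - 2 * (y 1 * y 1) - y 2 * y 2 := by
    funext y; unfold uu; ring
  rw [hfun]
  have h := ((((hprj 0 x).mul (hprj 0 x)).const_mul (3:ℝ)).sub
    (((hprj 1 x).mul (hprj 1 x)).const_mul (2:ℝ))).sub ((hprj 2 x).mul (hprj 2 x))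
  refine h.congr_fderiv (Eq.symm ?_)
  refine ContinuousLinearMap.ext fun v => ?_
  simp only [DU, ContinuousLinearMap.add_apply, ContinuousLinearMap.sub_apply,
    ContinuousLinearMap.smul_apply, prj_apply, smul_eq_mul]
  try ring

lemma DT_apply (x v : E3) : DT x v = 2 * x 0 * v 0 + 2 * x 1 * v 1 + 2 * x 2 * v 2 := by
  simp only [DT, ContinuousLinearMap.add_apply, ContinuousLinearMap.smul_apply, prj_apply,
    smul_eq_mul]
  try ring

lemma DU_apply (x v : E3) : DU x v = 6 * x 0 * v 0 - 4 * x 1 * v 1 - 2 * x 2 * v 2 := by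
  simp only [DU, ContinuousLinearMap.add_apply, ContinuousLinearMap.sub_apply,
    ContinuousLinearMap.smul_apply, prj_apply, smul_eq_mul]
  try ring

lemma DT_sgl (x : E3) (j : Fin 3) : DT x (sgl j) = 2 * x j := by
  rw [DT_apply]; fin_cases j <;> norm_num [sgl_apply, Fin.ext_iff] <;> rfl

lemma DU_sgl (x : E3) (j : Fin 3) : DU x (sgl j) = 2 * cc j * x j := by
  rw [DU_apply]; fin_cases j <;> norm_num [sgl_apply, Fin.ext_iff, cc] <;> first | rfl | ring

/-! ### The model class of functions -/

def V (A B : ℝ → ℝ) (x : E3) : ℝ := uu x * A (T x) + B (T x)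

def DV (A A1 B1 : ℝ → ℝ) (x : E3) : E3 →L[ℝ] ℝ :=
  A (T x) • DU x + (uu x * A1 (T x) + B1 (T x)) • DT x

def Chain (A A1 : ℝ → ℝ) : Prop := ∀ s : ℝ, 0 ≤ s → HasDerivAt A (A1 s) s

section chain

variable {A A1 A2 B B1 B2 : ℝ → ℝ}

lemma hV (hA : Chain A A1) (hB : Chain B B1) (x : E3) :
    HasFDerivAt (V A B) (DV A A1 B1 x) x := by
  have hAc : HasFDerivAt (fun y => A (T y)) (A1 (T x) • DT x) x :=
    (hA (T x) (T_nonneg x)).comp_hasFDerivAt x (hT x)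
  have hBc : HasFDerivAt (fun y => B (T y)) (B1 (T x) • DT x) x :=
    (hB (T x) (T_nonneg x)).comp_hasFDerivAt x (hT x)
  have h := ((hU x).mul hAc).add hBc
  refine h.congr_fderiv (Eq.symm ?_)
  refine ContinuousLinearMap.ext fun v => ?_
  simp only [DV, ContinuousLinearMap.add_apply, ContinuousLinearMap.smul_apply, smul_eq_mul]
  ring

lemma fderiv_V (hA : Chain A A1) (hB : Chain B B1) (x : E3) :
    fderiv ℝ (V A B) x = DV A A1 B1 x := (hV hA hB x).fderiv

lemma DV_sgl (A A1 B1 : ℝ → ℝ) (x : E3) (j : Fin 3) :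
    DV A A1 B1 x (sgl j) =
      x j * (2 * cc j * A (T x) + 2 * (uu x * A1 (T x) + B1 (T x))) := by
  simp only [DV, ContinuousLinearMap.add_apply, ContinuousLinearMap.smul_apply, smul_eq_mul,
    DT_sgl, DU_sgl]
  ring

/-- the directional derivative as a function -/
def W (A A1 B1 : ℝ → ℝ) (j : Fin 3) (x : E3) : ℝ :=
  2 * cc j * A (T x) + 2 * (uu x * A1 (T x) + B1 (T x))

lemma W_eq_V (A A1 B1 : ℝ → ℝ) (j : Fin 3) :
    W A A1 B1 j = V (fun s => 2 * A1 s) (fun s => 2 * cc j * A s + 2 * B1 s) := by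
  funext x; unfold W V; ring

lemma hW (hA : Chain A A1) (hA1 : Chain A1 A2) (hB1 : Chain B1 B2) (j : Fin 3) (x : E3) :
    HasFDerivAt (W A A1 B1 j)
      (DV (fun s => 2 * A1 s) (fun s => 2 * A2 s)
        (fun s => 2 * cc j * A1 s + 2 * B2 s) x) x := by
  rw [W_eq_V]
  refine hV ?_ ?_ x
  · intro s hs; exact (hA1 s hs).const_mul 2
  · intro s hs
    have h := ((hA s hs).const_mul (2 * cc j)).add ((hB1 s hs).const_mul 2)
    refine h.congr_deriv (Eq.symm ?_)
    all_goals ring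

lemma fderiv_V_sgl (hA : Chain A A1) (hB : Chain B B1) (j : Fin 3) :
    (fun z => fderiv ℝ (V A B) z (sgl j)) = fun z => z j * W A A1 B1 j z := by
  funext z
  rw [fderiv_V hA hB z, DV_sgl]
  rfl

lemma dfd_V (hA : Chain A A1) (hA1 : Chain A1 A2) (hB : Chain B B1) (hB1 : Chain B1 B2)
    (x : E3) (i j : Fin 3) :
    fderiv ℝ (fun z => fderiv ℝ (V A B) z (sgl j)) x (sgl i) =
      x j * (x i * (2 * cc i * (2 * A1 (T x)) +
          2 * (uu x * (2 * A2 (T x)) + (2 * cc j * A1 (T x) + 2 * B2 (T x)))))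
        + W A A1 B1 j x * sgl i j := by
  rw [fderiv_V_sgl hA hB j]
  have hm : HasFDerivAt (fun z : E3 => z j * W A A1 B1 j z) _ x := (hprj j x).mul (hW hA hA1 hB1 j x)
  rw [hm.fderiv]
  simp only [ContinuousLinearMap.add_apply, ContinuousLinearMap.smul_apply, smul_eq_mul,
    prj_apply, DV_sgl]
  try ring

lemma lap_V (hA : Chain A A1) (hA1 : Chain A1 A2) (hB : Chain B B1) (hB1 : Chain B1 B2) :
    lap (V A B) = V (fun s => 14 * A1 s + 4 * s * A2 s) (fun s => 6 * B1 s + 4 * s * B2 s) := by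
  funext x
  have key : ∀ i : Fin 3,
      fderiv ℝ (fun z => fderiv ℝ (V A B) z (sgl i)) x (sgl i) =
        x i * (x i * (2 * cc i * (2 * A1 (T x)) +
            2 * (uu x * (2 * A2 (T x)) + (2 * cc i * A1 (T x) + 2 * B2 (T x)))))
          + W A A1 B1 i x := by
    intro i
    rw [dfd_V hA hA1 hB hB1 x i i, sgl_same, mul_one]
  show (∑ i : Fin 3, fderiv ℝ (fun z => fderiv ℝ (V A B) z (sgl i)) x (sgl i)) = _
  rw [Fin.sum_univ_three, key 0, key 1, key 2]
  have c0 : cc 0 = 3 := by norm_num [cc]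
  have c1 : cc 1 = -2 := by norm_num [cc]
  have c2 : cc 2 = -1 := by norm_num [cc]; rfl
  simp only [V, W, c0, c1, c2]
  have hu : uu x = 3 * x 0 ^ 2 - 2 * x 1 ^ 2 - x 2 ^ 2 := rfl
  have ht : T x = x 0 ^ 2 + x 1 ^ 2 + x 2 ^ 2 := rfl
  rw [hu, ht]
  ring

end chain

/-! ### One-variable rational functions -/

lemma hpoly (c0 c1 c2 c3 c4 s : ℝ) :
    HasDerivAt (fun s : ℝ => c0 + c1 * s + c2 * s ^ 2 + c3 * s ^ 3 + c4 * s ^ 4)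
      (c1 + 2 * c2 * s + 3 * c3 * s ^ 2 + 4 * c4 * s ^ 3) s := by
  have h := ((((hasDerivAt_const s c0).add ((hasDerivAt_id' s).const_mul c1)).add
    ((hasDerivAt_pow 2 s).const_mul c2)).add ((hasDerivAt_pow 3 s).const_mul c3)).add
    ((hasDerivAt_pow 4 s).const_mul c4)
  refine h.congr_deriv (Eq.symm ?_)
  norm_num
  ring

lemma hrat {P DP Q : ℝ → ℝ} (m : ℕ) {s : ℝ} (hs : 1 + s ≠ 0)
    (hP : HasDerivAt P (DP s) s)
    (hQ : Q s * ((1 + s) ^ (m + 1) * (1 + s) ^ (m + 1)) =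
      DP s * (1 + s) ^ (m + 1) - P s * (((m : ℝ) + 1) * (1 + s) ^ m)) :
    HasDerivAt (fun t => P t / (1 + t) ^ (m + 1)) (Q s) s := by
  have hden : HasDerivAt (fun t : ℝ => (1 + t) ^ (m + 1))
      (((m + 1 : ℕ) : ℝ) * (1 + s) ^ (m + 1 - 1) * 1) s :=
    ((hasDerivAt_id' s).const_add 1).pow (m + 1)
  have h := hP.div hden (pow_ne_zero _ hs)
  refine h.congr_deriv (Eq.symm ?_)
  rw [eq_div_iff (pow_ne_zero 2 (pow_ne_zero _ hs))]
  have hm : m + 1 - 1 = m := rfl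
  rw [hm]
  push_cast at hQ ⊢
  linear_combination hQ

section onevar

variable (a b : ℝ)

def g0 : ℝ → ℝ := fun s => 1 / (1 + s) ^ 2
def g1 : ℝ → ℝ := fun s => (-2) / (1 + s) ^ 3
def g2 : ℝ → ℝ := fun s => 6 / (1 + s) ^ 4
def g3 : ℝ → ℝ := fun s => (-24) / (1 + s) ^ 5
def g4 : ℝ → ℝ := fun s => 120 / (1 + s) ^ 6

def NN0 : ℝ → ℝ := fun s => 0 + 0 * s + (b - 1) * s ^ 2 + (2 * b - a) * s ^ 3 + b * s ^ 4
def NN1 : ℝ → ℝ := fun s =>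
  0 + (2 * b - 2) * s + (3 - 3 * a + 3 * b) * s ^ 2 + (2 * a) * s ^ 3 + (-b) * s ^ 4
def NN2 : ℝ → ℝ := fun s =>
  (2 * b - 2) + (16 - 6 * a - 4 * b) * s + (-12 + 18 * a - 12 * b) * s ^ 2 +
    (-6 * a - 4 * b) * s ^ 3 + (2 * b) * s ^ 4
def NN3 : ℝ → ℝ := fun s =>
  (30 - 6 * a - 18 * b) + (-120 + 72 * a) * s + (60 - 108 * a + 48 * b) * s ^ 2 +
    (24 * a + 24 * b) * s ^ 3 + (-6 * b) * s ^ 4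
def NN4 : ℝ → ℝ := fun s =>
  (-360 + 120 * a + 144 * b) + (960 - 720 * a + 96 * b) * s +
    (-360 + 720 * a - 216 * b) * s ^ 2 + (-120 * a - 144 * b) * s ^ 3 + (24 * b) * s ^ 4

def ff0 : ℝ → ℝ := fun s => NN0 a b s / (1 + s) ^ 5
def ff1 : ℝ → ℝ := fun s => NN1 a b s / (1 + s) ^ 6
def ff2 : ℝ → ℝ := fun s => NN2 a b s / (1 + s) ^ 7
def ff3 : ℝ → ℝ := fun s => NN3 a b s / (1 + s) ^ 8
def ff4 : ℝ → ℝ := fun s => NN4 a b s / (1 + s) ^ 9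

lemma one_add_ne {s : ℝ} (hs : 0 ≤ s) : (1 : ℝ) + s ≠ 0 := by positivity

lemma cg0 : Chain g0 g1 := by
  intro s hs
  refine hrat (P := fun _ => (1:ℝ)) (DP := fun _ => (0:ℝ)) 1 (one_add_ne hs)
    (hasDerivAt_const s 1) ?_
  have h1 := one_add_ne hs
  show g1 s * _ = _
  unfold g1
  field_simp
  ring

lemma cg1 : Chain g1 g2 := by
  intro s hs
  refine hrat (P := fun _ => (-2:ℝ)) (DP := fun _ => (0:ℝ)) 2 (one_add_ne hs)
    (hasDerivAt_const s (-2)) ?_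
  have h1 := one_add_ne hs
  show g2 s * _ = _
  unfold g2
  field_simp
  ring

lemma cg2 : Chain g2 g3 := by
  intro s hs
  refine hrat (P := fun _ => (6:ℝ)) (DP := fun _ => (0:ℝ)) 3 (one_add_ne hs)
    (hasDerivAt_const s 6) ?_
  have h1 := one_add_ne hs
  show g3 s * _ = _
  unfold g3
  field_simp
  ring

lemma cg3 : Chain g3 g4 := by
  intro s hs
  refine hrat (P := fun _ => (-24:ℝ)) (DP := fun _ => (0:ℝ)) 4 (one_add_ne hs)
    (hasDerivAt_const s (-24)) ?_
  have h1 := one_add_ne hs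
  show g4 s * _ = _
  unfold g4
  field_simp
  ring

lemma cf0 : Chain (ff0 a b) (ff1 a b) := by
  intro s hs
  have h1 := one_add_ne hs
  refine hrat (P := NN0 a b) (DP := fun s => 0 + 2 * (b - 1) * s + 3 * (2 * b - a) * s ^ 2 + 4 * b * s ^ 3) (Q := ff1 a b)
    4 (one_add_ne hs) ?_ ?_
  · unfold NN0; exact hpoly 0 0 (b - 1) (2 * b - a) b s
  · unfold ff1 NN1 NN0
    field_simp
    ring

lemma cf1 : Chain (ff1 a b) (ff2 a b) := by
  intro s hs
  have h1 := one_add_ne hs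
  refine hrat (P := NN1 a b) (DP := fun s => 2 * b - 2 + 2 * (3 - 3 * a + 3 * b) * s + 3 * (2 * a) * s ^ 2 + 4 * (-b) * s ^ 3) (Q := ff2 a b)
    5 (one_add_ne hs) ?_ ?_
  · unfold NN1; exact hpoly 0 (2 * b - 2) (3 - 3 * a + 3 * b) (2 * a) (-b) s
  · unfold ff2 NN2 NN1
    field_simp
    ring

lemma cf2 : Chain (ff2 a b) (ff3 a b) := by
  intro s hs
  have h1 := one_add_ne hs
  refine hrat (P := NN2 a b) (DP := fun s => 16 - 6 * a - 4 * b + 2 * (-12 + 18 * a - 12 * b) * s + 3 * (-6 * a - 4 * b) * s ^ 2 + 4 * (2 * b) * s ^ 3) (Q := ff3 a b)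
    6 (one_add_ne hs) ?_ ?_
  · unfold NN2; exact hpoly (2 * b - 2) (16 - 6 * a - 4 * b) (-12 + 18 * a - 12 * b) (-6 * a - 4 * b) (2 * b) s
  · unfold ff3 NN3 NN2
    field_simp
    ring

lemma cf3 : Chain (ff3 a b) (ff4 a b) := by
  intro s hs
  have h1 := one_add_ne hs
  refine hrat (P := NN3 a b) (DP := fun s => -120 + 72 * a + 2 * (60 - 108 * a + 48 * b) * s + 3 * (24 * a + 24 * b) * s ^ 2 + 4 * (-6 * b) * s ^ 3) (Q := ff4 a b)
    7 (one_add_ne hs) ?_ ?_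
  · unfold NN3; exact hpoly (30 - 6 * a - 18 * b) (-120 + 72 * a) (60 - 108 * a + 48 * b) (24 * a + 24 * b) (-6 * b) s
  · unfold ff4 NN4 NN3
    field_simp
    ring

/-! ### second-level one-variable functions -/

def GG : ℝ → ℝ := fun s => 14 * g1 s + 4 * s * g2 s
def GG1 : ℝ → ℝ := fun s => 18 * g2 s + 4 * s * g3 s
def GG2 : ℝ → ℝ := fun s => 22 * g3 s + 4 * s * g4 s
def FF : ℝ → ℝ := fun s => 6 * ff1 a b s + 4 * s * ff2 a b s
def FF1 : ℝ → ℝ := fun s => 10 * ff2 a b s + 4 * s * ff3 a b s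
def FF2 : ℝ → ℝ := fun s => 14 * ff3 a b s + 4 * s * ff4 a b s

lemma step {p p' q q' : ℝ → ℝ} (α : ℝ) {s : ℝ}
    (hp : HasDerivAt p (p' s) s) (hq : HasDerivAt q (q' s) s) :
    HasDerivAt (fun s => α * p s + 4 * s * q s)
      (α * p' s + (4 * q s + 4 * s * q' s)) s := by
  have h4 : HasDerivAt (fun s : ℝ => 4 * s) 4 s := by
    simpa using (hasDerivAt_id' s).const_mul (4:ℝ)
  have h := (hp.const_mul α).add (h4.mul hq)
  refine h.congr_deriv (Eq.symm ?_)
  try ring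

lemma cGG : Chain GG GG1 := by
  intro s hs
  have h := step 14 (cg1 s hs) (cg2 s hs)
  refine h.congr_deriv (Eq.symm ?_)
  unfold GG1
  ring

lemma cGG1 : Chain GG1 GG2 := by
  intro s hs
  have h := step 18 (cg2 s hs) (cg3 s hs)
  refine h.congr_deriv (Eq.symm ?_)
  unfold GG2
  ring

lemma cFF : Chain (FF a b) (FF1 a b) := by
  intro s hs
  have h := step 6 (cf1 a b s hs) (cf2 a b s hs)
  refine h.congr_deriv (Eq.symm ?_)
  unfold FF1
  ring

lemma cFF1 : Chain (FF1 a b) (FF2 a b) := by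
  intro s hs
  have h := step 10 (cf2 a b s hs) (cf3 a b s hs)
  refine h.congr_deriv (Eq.symm ?_)
  unfold FF2
  ring

/-! ### Assembly -/

lemma hk_eq : kfun a b = V g0 (fun s => 1 + ff0 a b s) := by
  funext x
  have hn : ‖x‖ ^ 2 = T x := by
    rw [EuclideanSpace.norm_eq, Real.sq_sqrt (by positivity)]
    simp [T, Fin.sum_univ_three, sq_abs]
  have h4 : ‖x‖ ^ 4 = T x ^ 2 := by
    rw [show ‖x‖ ^ 4 = (‖x‖ ^ 2) ^ 2 by ring, hn]
  have h1 : (1 : ℝ) + T x ≠ 0 := one_add_T_ne x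
  unfold kfun V g0 ff0 NN0 uu
  rw [hn, h4]
  field_simp
  ring

lemma chain_B : Chain (fun s => 1 + ff0 a b s) (ff1 a b) :=
  fun s hs => (cf0 a b s hs).const_add 1

lemma T_zero : T 0 = 0 := by simp [T]

lemma uu_zero : uu 0 = 0 := by simp [uu]

lemma lapk : lap (kfun a b) = V GG (FF a b) := by
  rw [hk_eq]
  exact lap_V cg0 cg1 (chain_B a b) (cf1 a b)

lemma k_at_zero : kfun a b 0 = 1 := by
  rw [hk_eq]
  simp [V, uu_zero, T_zero, ff0, NN0]

lemma lapk_at_zero : lap (kfun a b) 0 = 0 := by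
  rw [lapk]
  simp [V, uu_zero, T_zero, FF, ff1, ff2, NN1, NN2]

lemma laplapk_at_zero : lap (lap (kfun a b)) 0 = 120 * (b - 1) := by
  rw [lapk, lap_V cGG cGG1 (cFF a b) (cFF1 a b)]
  simp only [V, uu_zero, T_zero, zero_mul, zero_add, FF1, FF2, ff2, ff3, ff4, NN2, NN3, NN4]
  norm_num
  ring

lemma DV_zero (A A1 B1 : ℝ → ℝ) : DV A A1 B1 0 = 0 := by
  refine ContinuousLinearMap.ext fun v => ?_
  simp only [DV, ContinuousLinearMap.add_apply, ContinuousLinearMap.smul_apply, smul_eq_mul,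
    ContinuousLinearMap.zero_apply, DU_apply, DT_apply]
  simp

lemma grad_V_zero {A A1 B B1 : ℝ → ℝ} (hA : Chain A A1) (hB : Chain B B1) :
    gradient (V A B) 0 = 0 := by
  unfold gradient
  rw [(hV hA hB 0).fderiv, DV_zero]
  simp

lemma grad_k_zero : gradient (kfun a b) 0 = 0 := by
  rw [hk_eq]
  exact grad_V_zero cg0 (chain_B a b)

lemma grad_lapk_zero : gradient (lap (kfun a b)) 0 = 0 := by
  rw [lapk]
  exact grad_V_zero cGG (cFF a b)

lemma diff_fderiv_V :
    DifferentiableAt ℝ (fderiv ℝ (V g0 (fun s => 1 + ff0 a b s))) 0 := by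
  have hfe : fderiv ℝ (V g0 (fun s => 1 + ff0 a b s)) = fun z => DV g0 g1 (ff1 a b) z :=
    funext fun z => fderiv_V cg0 (chain_B a b) z
  rw [hfe]
  have hDU : DifferentiableAt ℝ (fun z : E3 => DU z) 0 := by
    show DifferentiableAt ℝ (fun z : E3 =>
      (6 * z 0) • prj 0 + ((-4) * z 1) • prj 1 + ((-2) * z 2) • prj 2) 0
    exact ((((hprj 0 0).differentiableAt.const_mul 6).smul_const (prj 0)).add
      (((hprj 1 0).differentiableAt.const_mul (-4)).smul_const (prj 1))).add
      (((hprj 2 0).differentiableAt.const_mul (-2)).smul_const (prj 2))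
  have hDT : DifferentiableAt ℝ (fun z : E3 => DT z) 0 := by
    show DifferentiableAt ℝ (fun z : E3 =>
      (2 * z 0) • prj 0 + (2 * z 1) • prj 1 + (2 * z 2) • prj 2) 0
    exact ((((hprj 0 0).differentiableAt.const_mul 2).smul_const (prj 0)).add
      (((hprj 1 0).differentiableAt.const_mul 2).smul_const (prj 1))).add
      (((hprj 2 0).differentiableAt.const_mul 2).smul_const (prj 2))
  have dg0c : DifferentiableAt ℝ (fun z : E3 => g0 (T z)) 0 :=
    ((cg0 (T 0) (T_nonneg 0)).comp_hasFDerivAt 0 (hT 0)).differentiableAt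
  have dg1c : DifferentiableAt ℝ (fun z : E3 => g1 (T z)) 0 :=
    ((cg1 (T 0) (T_nonneg 0)).comp_hasFDerivAt 0 (hT 0)).differentiableAt
  have dff1c : DifferentiableAt ℝ (fun z : E3 => ff1 a b (T z)) 0 :=
    ((cf1 a b (T 0) (T_nonneg 0)).comp_hasFDerivAt 0 (hT 0)).differentiableAt
  have duu := (hU (0 : E3)).differentiableAt
  show DifferentiableAt ℝ
    (fun z => g0 (T z) • DU z + (uu z * g1 (T z) + ff1 a b (T z)) • DT z) 0
  exact (dg0c.smul hDU).add (((duu.mul dg1c).add dff1c).smul hDT)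

lemma hess (i j : Fin 3) :
    iteratedFDeriv ℝ 2 (kfun a b) 0
      ![EuclideanSpace.single i 1, EuclideanSpace.single j 1] = 2 * cc j * sgl i j := by
  show iteratedFDeriv ℝ 2 (kfun a b) 0 ![sgl i, sgl j] = 2 * cc j * sgl i j
  rw [hk_eq, iteratedFDeriv_two_apply]
  have hm0 : (![sgl i, sgl j] : Fin 2 → E3) 0 = sgl i := rfl
  have hm1 : (![sgl i, sgl j] : Fin 2 → E3) 1 = sgl j := rfl
  rw [hm0, hm1]
  set Vk := V g0 (fun s => 1 + ff0 a b s) with hVk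
  have hL : fderiv ℝ (fun y => fderiv ℝ Vk y (sgl j)) 0 (sgl i)
      = fderiv ℝ (fderiv ℝ Vk) 0 (sgl i) (sgl j) := by
    have h := fderiv_clm_apply (c := fderiv ℝ Vk) (u := fun _ => sgl j)
      (diff_fderiv_V a b) (differentiableAt_const _)
    simp only [fderiv_fun_const, Pi.zero_apply, ContinuousLinearMap.comp_zero, zero_add] at h
    rw [h]
    simp [ContinuousLinearMap.flip_apply]
  rw [← hL, dfd_V cg0 cg1 (chain_B a b) (cf1 a b) 0 i j]
  have hz : (0 : E3) j = 0 := by simp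
  rw [hz]
  simp only [W, T_zero, uu_zero, zero_mul, mul_zero, zero_add, add_zero, g0, ff1, NN1]
  norm_num

end onevar

end

end Stmt18Aux

open Stmt18Aux

theorem stmt18 (a b : ℝ) (H : Matrix (Fin 3) (Fin 3) ℝ)
    (hH : ∀ i j, H i j = iteratedFDeriv ℝ 2 (kfun a b) 0
      ![EuclideanSpace.single i 1, EuclideanSpace.single j 1]) :
    kfun a b 0 = 1 ∧
    gradient (kfun a b) 0 = 0 ∧
    lap (kfun a b) 0 = 0 ∧
    gradient (lap (kfun a b)) 0 = 0 ∧
    IsUnit H ∧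
    lap (lap (kfun a b)) 0 +
        dotProduct (fun i => gradient (lap (kfun a b)) 0 i)
          (H⁻¹.mulVec fun i => gradient (lap (kfun a b)) 0 i)
      = 120 * (b - 1) := by
  have hg2 := grad_lapk_zero a b
  have hent : ∀ i j, H i j = 2 * cc j * sgl i j := fun i j => by
    rw [hH]; exact hess a b i j
  refine ⟨k_at_zero a b, grad_k_zero a b, lapk_at_zero a b, hg2, ?_, ?_⟩
  · rw [Matrix.isUnit_iff_isUnit_det, Matrix.det_fin_three]
    simp only [hent]
    norm_num [sgl_apply, cc, Fin.ext_iff]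
    exact (by norm_num : (-1 : ℝ) ≠ 0)
  · have hzero : (fun i => gradient (lap (kfun a b)) 0 i) = (fun _ => (0 : ℝ)) := by
      funext i; rw [hg2]; simp
    have hdot : dotProduct (fun i => gradient (lap (kfun a b)) 0 i)
        (H⁻¹.mulVec fun i => gradient (lap (kfun a b)) 0 i) = 0 := by
      rw [hzero]
      simp [dotProduct]
    rw [hdot, add_zero, laplapk_at_zero]
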